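/- For every real b > 0, the derivative at s = 0 of the entire-near-0 function s ↦ (π/(2b))^{−2s}·(1 − 2^{−2s})·ζ(2s) equals −log 2. (Equivalently, the derivative at zero of the zeta-function ζ₁(s; M) of the Laplacian on (0,b] with Dirichlet condition at 0 and Neumann condition at b equals 2·ζ(0)·log 2 = −log 2, so the analytic torsion norm of the interval satisfies ‖1‖²_{T₀((0,b])} = exp(−∂_sζ₁(0)) = 2.) -/

import Mathlib

/-- The derivative at `s = 0` of `s ↦ (π/(2b))^{-2s} (1 - 2^{-2s}) ζ(2s)` (the
zeta-function of the Laplacian on `(0,b]` with Dirichlet condition at `0` and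
Neumann condition at `b`) equals `-log 2`. -/
theorem deriv_zero_zeta_interval_dirichlet_neumann (b : ℝ) (hb : 0 < b) :
    deriv (fun s : ℂ =>
        ((Real.pi / (2 * b) : ℝ) : ℂ) ^ (-2 * s) * (1 - (2 : ℂ) ^ (-2 * s)) *
          riemannZeta (2 * s)) 0
      = -(Real.log 2 : ℂ) := by
  set a : ℂ := ((Real.pi / (2 * b) : ℝ) : ℂ) with ha
  have ha0 : a ≠ 0 := by
    simp only [ha, ne_eq, Complex.ofReal_eq_zero]
    positivity
  have hinner : HasDerivAt (fun s : ℂ => -2 * s) (-2) 0 := by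
    simpa using (hasDerivAt_id (0 : ℂ)).const_mul (-2 : ℂ)
  have hg : HasDerivAt (fun s : ℂ => a ^ (-2 * s)) (a ^ (-2 * (0:ℂ)) * Complex.log a * (-2)) 0 :=
    hinner.const_cpow (Or.inl ha0)
  have hh : HasDerivAt (fun s : ℂ => 1 - (2 : ℂ) ^ (-2 * s))
      (-((2:ℂ) ^ (-2 * (0:ℂ)) * Complex.log 2 * (-2))) 0 :=
    (hinner.const_cpow (Or.inl two_ne_zero)).const_sub 1
  have hz : HasDerivAt (fun s : ℂ => riemannZeta (2 * s)) (deriv riemannZeta 0 * 2) 0 := by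
    have h2 : HasDerivAt (fun s : ℂ => 2 * s) (2 : ℂ) 0 := by
      simpa using (hasDerivAt_id (0 : ℂ)).const_mul (2 : ℂ)
    have hζ : HasDerivAt riemannZeta (deriv riemannZeta 0) (2 * (0:ℂ)) := by
      rw [mul_zero]
      exact (differentiableAt_riemannZeta (by norm_num)).hasDerivAt
    exact hζ.comp 0 h2
  have hF := ((hg.mul hh).mul hz).deriv
  simp only [Pi.mul_def] at hF
  rw [hF]
  have hζ0 : riemannZeta (2 * (0:ℂ)) = -1/2 := by
    rw [mul_zero, riemannZeta_zero]
  have hlog : Complex.log 2 = (Real.log 2 : ℂ) := by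
    rw [show (2:ℂ) = ((2:ℝ):ℂ) by norm_num]
    exact (Complex.ofReal_log (by norm_num)).symm
  simp only [mul_zero, Complex.cpow_zero, riemannZeta_zero, hlog]
  ring
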